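/- For every ω in the piecewise polynomial space V_h^k (with periodic trace identification), the central-flux bilinear operator satisfies L^c(ω,ω) = 0. -/

import Mathlib

open Polynomial Set

noncomputable section

namespace FW

variable {N : ℕ}

/-- Minus trace `ω⁻` at interface `j+1/2` (right end of cell `j`). -/
def trM (x : Fin (N + 1) → ℝ) (ω : Fin N → Polynomial ℝ) (j : Fin N) : ℝ :=
  (ω j).eval (x j.succ)

/-- Plus trace `ω⁺` at interface `j+1/2` (left end of the next cell, cyclically). -/
def trP [NeZero N] (x : Fin (N + 1) → ℝ) (ω : Fin N → Polynomial ℝ) (j : Fin N) : ℝ :=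
  (ω (j + 1)).eval (x (j + 1).castSucc)

/-- Average trace `{ω}`. -/
def trA [NeZero N] (x : Fin (N + 1) → ℝ) (ω : Fin N → Polynomial ℝ) (j : Fin N) : ℝ :=
  (trP x ω j + trM x ω j) / 2

/-- Jump `[ω]`. -/
def jmp [NeZero N] (x : Fin (N + 1) → ℝ) (ω : Fin N → Polynomial ℝ) (j : Fin N) : ℝ :=
  trP x ω j - trM x ω j

/-- Cell L² pairing `(u, φ)_{I_j}` of a piecewise polynomial with a test polynomial. -/
def ipj (x : Fin (N + 1) → ℝ) (u : Fin N → Polynomial ℝ) (j : Fin N) (φ : Polynomial ℝ) : ℝ :=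
  ∫ t in (x j.castSucc)..(x j.succ), (u j).eval t * φ.eval t

/-- Cell pairing `(f∘u, φ)_{I_j}`. -/
def ipfj (x : Fin (N + 1) → ℝ) (f : ℝ → ℝ) (u : Fin N → Polynomial ℝ) (j : Fin N)
    (φ : Polynomial ℝ) : ℝ :=
  ∫ t in (x j.castSucc)..(x j.succ), f ((u j).eval t) * φ.eval t

/-- Boundary pairing `⟨g, φ⟩_{I_j}` for interface values `g`. -/
def bdj [NeZero N] (x : Fin (N + 1) → ℝ) (g : Fin N → ℝ) (j : Fin N) (φ : Polynomial ℝ) : ℝ :=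
  g j * φ.eval (x j.succ) - g (j - 1) * φ.eval (x j.castSucc)

/-- Membership in the space `V_h^k` of piecewise polynomials of degree at most `k`. -/
def memV (k : ℕ) (ω : Fin N → Polynomial ℝ) : Prop :=
  ∀ j, (ω j).degree ≤ (k : WithBot ℕ)

/-- `L⁻(ω, φ)`. -/
def Lm [NeZero N] (x : Fin (N + 1) → ℝ) (ω φ : Fin N → Polynomial ℝ) : ℝ :=
  ∑ j, (-(ipj x ω j (derivative (φ j))) + bdj x (trM x ω) j (φ j))

/-- `L⁺(ω, φ)`. -/
def Lp [NeZero N] (x : Fin (N + 1) → ℝ) (ω φ : Fin N → Polynomial ℝ) : ℝ :=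
  ∑ j, (-(ipj x ω j (derivative (φ j))) + bdj x (trP x ω) j (φ j))

/-- `L^c(ω, φ)`. -/
def Lc [NeZero N] (x : Fin (N + 1) → ℝ) (ω φ : Fin N → Polynomial ℝ) : ℝ :=
  ∑ j, (-(ipj x ω j (derivative (φ j))) + bdj x (trA x ω) j (φ j))

/-- Godunov numerical flux. -/
def godunov (f : ℝ → ℝ) (c d : ℝ) : ℝ :=
  if c < d then sInf (f '' Set.Icc c d) else sSup (f '' Set.Icc d c)

/-- Conservative numerical flux for `f(u) = u^p/p`, `F(u) = u^(p+1)/(p(p+1))`. -/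
def consFlux (p : ℕ) (c d : ℝ) : ℝ :=
  if c = d then c ^ p / (p : ℝ)
  else (d ^ (p + 1) / ((p : ℝ) * ((p : ℝ) + 1)) - c ^ (p + 1) / ((p : ℝ) * ((p : ℝ) + 1))) / (d - c)

/-- Dissipative (Godunov-flux) nonlinear form `N^d`. -/
def Nd [NeZero N] (x : Fin (N + 1) → ℝ) (f : ℝ → ℝ) (ω φ : Fin N → Polynomial ℝ) : ℝ :=
  ∑ j, (-(ipfj x f ω j (derivative (φ j)))
    + bdj x (fun i => godunov f (trM x ω i) (trP x ω i)) j (φ j))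

/-- Conservative-flux nonlinear form `N^c`. -/
def Nc [NeZero N] (x : Fin (N + 1) → ℝ) (p : ℕ) (ω φ : Fin N → Polynomial ℝ) : ℝ :=
  ∑ j, (-(ipfj x (fun w => w ^ p / (p : ℝ)) ω j (derivative (φ j)))
    + bdj x (fun i => consFlux p (trM x ω i) (trP x ω i)) j (φ j))

end FW

lemma poly_int_sq (P : Polynomial ℝ) (a b : ℝ) :
    ∫ t in a..b, P.eval t * (derivative P).eval t
      = P.eval b ^ 2 / 2 - P.eval a ^ 2 / 2 := by
  have h : ∀ t : ℝ, HasDerivAt (fun s => P.eval s ^ 2 / 2)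
      (P.eval t * (derivative P).eval t) t := by
    intro t
    have h2 : HasDerivAt (fun s => P.eval s ^ 2 / 2)
        (((2 : ℕ) : ℝ) * P.eval t ^ (2 - 1) * (derivative P).eval t / 2) t :=
      ((P.hasDerivAt t).fun_pow 2).div_const 2
    convert h2 using 1
    ring
  rw [intervalIntegral.integral_eq_sub_of_hasDerivAt (fun t _ => h t)
    ((P.continuous_aeval.mul (derivative P).continuous_aeval).intervalIntegrable a b)]

theorem stmt0 {N : ℕ} [NeZero N] (hN : 1 ≤ N) (a b : ℝ) (hab : a < b)
    (x : Fin (N + 1) → ℝ) (hx : StrictMono x) (hxa : x 0 = a) (hxb : x (Fin.last N) = b)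
    (k : ℕ) (ω : Fin N → Polynomial ℝ) (hω : FW.memV k ω) :
    FW.Lc x ω ω = 0 := by
  classical
  set m : Fin N → ℝ := FW.trM x ω with hm
  set p : Fin N → ℝ := fun j => (ω j).eval (x j.castSucc) with hp
  have key : ∀ j : Fin N,
      (-(FW.ipj x ω j (derivative (ω j))) + FW.bdj x (FW.trA x ω) j (ω j))
      = m j * p (j + 1) / 2 - m (j - 1) * p j / 2 := by
    intro j
    have hip : FW.ipj x ω j (derivative (ω j)) = m j ^ 2 / 2 - p j ^ 2 / 2 := by
      simp [FW.ipj, poly_int_sq, hm, FW.trM, hp]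
    have htrA : ∀ i : Fin N, FW.trA x ω i = (p (i + 1) + m i) / 2 := fun i => rfl
    have hbd : FW.bdj x (FW.trA x ω) j (ω j)
        = (p (j + 1) + m j) / 2 * m j - (p j + m (j - 1)) / 2 * p j := by
      rw [FW.bdj, htrA j, htrA (j - 1), sub_add_cancel]
      rfl
    rw [hip, hbd]; ring
  rw [FW.Lc]
  simp only [key]
  rw [Finset.sum_sub_distrib]
  have hshift : ∑ j : Fin N, m j * p (j + 1) / 2 = ∑ j : Fin N, m (j - 1) * p j / 2 := by
    refine Fintype.sum_equiv (Equiv.addRight (1 : Fin N)) _ _ (fun j => ?_)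
    simp [Equiv.coe_addRight]
  rw [hshift, sub_self]
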